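/- Let F = {(u,v,w) ∈ ℝ³ : w ≥ u² + |v|} and for t ∈ (−1,1) let x_t = (t, 0, t²) (so x_t lies on the manifold M = {(t,0,t²) : t ∈ (−1,1)} ⊂ F). Then the normal cone mapping restricted to M is inner semicontinuous at the origin: for every ȳ ∈ N_F(0,0,0) and every sequence t_k → 0 in (−1,1), there exist vectors y_k ∈ N_F(x_{t_k}) with y_k → ȳ. -/

import Mathlib

open Filter Topology

/-- The point `(t, 0, t²)` of `ℝ³`. -/
noncomputable def ridgePoint (t : ℝ) : EuclideanSpace ℝ (Fin 3) := WithLp.toLp 2 ![t, 0, t ^ 2]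

/-- For `F = {(u,v,w) : w ≥ u² + |v|} ⊆ ℝ³` and the manifold
`M = {(t,0,t²) : t ∈ (−1,1)} ⊆ F`, the normal cone mapping restricted to `M` is inner
semicontinuous at the origin: for every `ȳ ∈ N_F(0)` and every sequence `t_k → 0` in
`(−1,1)` there are `y_k ∈ N_F(t_k, 0, t_k²)` with `y_k → ȳ`. -/
theorem normal_cone_inner_semicontinuous_ridge
    (ybar : EuclideanSpace ℝ (Fin 3))
    (hybar : ∀ q ∈ {p : EuclideanSpace ℝ (Fin 3) | p 0 ^ 2 + |p 1| ≤ p 2},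
      (inner ℝ ybar (q - (0 : EuclideanSpace ℝ (Fin 3))) : ℝ) ≤ 0)
    (t : ℕ → ℝ) (ht : ∀ k, t k ∈ Set.Ioo (-1 : ℝ) 1)
    (htlim : Tendsto t atTop (𝓝 0)) :
    ∃ y : ℕ → EuclideanSpace ℝ (Fin 3),
      Tendsto y atTop (𝓝 ybar) ∧
      ∀ k, ∀ q ∈ {p : EuclideanSpace ℝ (Fin 3) | p 0 ^ 2 + |p 1| ≤ p 2},
        (inner ℝ (y k) (q - ridgePoint (t k)) : ℝ) ≤ 0 := by
  -- Extract the key inequality defining the normal cone at the origin.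
  have key : ∀ u v : ℝ, ybar 0 * u + ybar 1 * v + ybar 2 * (u ^ 2 + |v|) ≤ 0 := by
    intro u v
    have h := hybar (WithLp.toLp 2 ![u, v, u ^ 2 + |v|] : EuclideanSpace ℝ (Fin 3)) (by simp)
    simpa [PiLp.inner_apply, Fin.sum_univ_three, RCLike.inner_apply, mul_comm] using h
  set a := ybar 0 with ha'
  set b := ybar 1 with hb'
  set c := ybar 2 with hc'
  -- c ≤ 0 and |b| ≤ -c
  have h1 := key 0 1
  have h2 := key 0 (-1)
  have hc : c ≤ 0 := by simp at h1 h2; linarith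
  have hb : |b| ≤ -c := by
    rw [abs_le]; simp at h1 h2; constructor <;> linarith
  -- a = 0
  have ha : a = 0 := by
    have hne : (1 : ℝ) - c ≠ 0 := by linarith
    set ε := a / (1 - c) with hε'
    have hε : a = (1 - c) * ε := by rw [hε']; field_simp
    have h3 := key ε 0
    have h4 : ε = 0 := by simp at h3; nlinarith [sq_nonneg ε]
    rw [hε, h4, mul_zero]
  -- the approximating sequence
  refine ⟨fun k => ybar + (-2 * c * t k) • EuclideanSpace.single 0 (1 : ℝ), ?_, ?_⟩
  · have hs : Tendsto (fun k => -2 * c * t k) atTop (𝓝 0) := by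
      simpa using htlim.const_mul (-2 * c)
    have h5 : Tendsto (fun k => ybar + (-2 * c * t k) •
        (EuclideanSpace.single 0 (1 : ℝ) : EuclideanSpace ℝ (Fin 3))) atTop
        (𝓝 (ybar + (0 : ℝ) • (EuclideanSpace.single 0 (1 : ℝ) : EuclideanSpace ℝ (Fin 3)))) :=
      tendsto_const_nhds.add (hs.smul_const _)
    simpa using h5
  · intro k q hq
    have hq' : q 0 ^ 2 + |q 1| ≤ q 2 := hq
    have hbq : b * q 1 ≤ (-c) * |q 1| := by
      calc b * q 1 ≤ |b * q 1| := le_abs_self _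
        _ = |b| * |q 1| := abs_mul _ _
        _ ≤ (-c) * |q 1| := mul_le_mul_of_nonneg_right hb (abs_nonneg _)
    have hexp : (inner ℝ (ybar + (-2 * c * t k) • EuclideanSpace.single 0 (1 : ℝ))
        (q - ridgePoint (t k)) : ℝ)
        = a * (q 0 - t k) + b * (q 1 - 0) + c * (q 2 - t k ^ 2)
          + (-2 * c * t k) * (q 0 - t k) := by
      simp [PiLp.inner_apply, Fin.sum_univ_three, RCLike.inner_apply, ridgePoint,
        ha', hb', hc', EuclideanSpace.single_apply]
      ring
    rw [hexp, ha]
    nlinarith [hbq, mul_nonpos_of_nonpos_of_nonneg hc (sq_nonneg (q 0 - t k)),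
      mul_nonpos_of_nonpos_of_nonneg hc (sub_nonneg.2 hq'), abs_nonneg (q 1)]
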